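/- Let K be a field with characteristic different from 2 and let α1, α2 ∈ K be nonzero and distinct, so that W : y^2 = x(x − α1)(x − α2) is an elliptic curve over K. Let P = (x, y) and Q = (a, b) be affine points of W(K). Then x^4 − 4a x^3 + 4(α1 + α2) a x^2 − 2 α1 α2 x^2 − 4 α1 α2 a x + α1^2 α2^2 = 0 if and only if 2P = Q or 2P = −Q in the group W(K). -/

import Mathlib

namespace Stmt8

/-- The Weierstrass curve `W : y² = x(x - α₁)(x - α₂) = x³ - (α₁ + α₂)x² + α₁α₂x` over `K`. -/
def W {K : Type*} [Field K] (α₁ α₂ : K) : WeierstrassCurve.Affine K :=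
  { a₁ := 0, a₂ := -(α₁ + α₂), a₃ := 0, a₄ := α₁ * α₂, a₆ := 0 }

open Classical in
open WeierstrassCurve.Affine in
/-- For the elliptic curve `W : y² = x(x - α₁)(x - α₂)` over a field of characteristic `≠ 2`
with `α₁, α₂` nonzero and distinct, and affine points `P = (x, y)`, `Q = (a, b)` of `W(K)`, the
quartic `x⁴ - 4ax³ + 4(α₁ + α₂)ax² - 2α₁α₂x² - 4α₁α₂ax + α₁²α₂²` vanishes if and only if
`2P = Q` or `2P = -Q` in the group `W(K)`. -/
theorem quartic_characterizes_halves_of_Q {K : Type*} [Field K]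
    (hchar : (ringChar K) ≠ 2)
    (α₁ α₂ : K) (hα₁ : α₁ ≠ 0) (hα₂ : α₂ ≠ 0) (hne : α₁ ≠ α₂)
    (x y a b : K)
    (hP : (W α₁ α₂).Nonsingular x y) (hQ : (W α₁ α₂).Nonsingular a b) :
    x ^ 4 - 4 * a * x ^ 3 + 4 * (α₁ + α₂) * a * x ^ 2 - 2 * (α₁ * α₂) * x ^ 2
        - 4 * (α₁ * α₂) * a * x + α₁ ^ 2 * α₂ ^ 2 = 0 ↔
      ((2 : ℕ) • WeierstrassCurve.Affine.Point.some _ _ hP =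
          WeierstrassCurve.Affine.Point.some _ _ hQ ∨
       (2 : ℕ) • WeierstrassCurve.Affine.Point.some _ _ hP =
          -WeierstrassCurve.Affine.Point.some _ _ hQ) := by
  have h2 : (2 : K) ≠ 0 := Ring.two_ne_zero hchar
  have hPeq : y ^ 2 = x ^ 3 - (α₁ + α₂) * x ^ 2 + α₁ * α₂ * x := by
    have := ((W α₁ α₂).nonsingular_iff x y).mp hP |>.1
    rw [equation_iff] at this
    simp only [W] at this
    linear_combination this
  have hsmul : (2 : ℕ) • WeierstrassCurve.Affine.Point.some _ _ hP =
      WeierstrassCurve.Affine.Point.some _ _ hP + WeierstrassCurve.Affine.Point.some _ _ hP :=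
    two_nsmul _
  have hnegY : ∀ u v : K, (W α₁ α₂).negY u v = -v := by
    intro u v; simp [negY, W]
  by_cases hy : y = 0
  · -- `P` is 2-torsion, so `2P = 0` and both sides are false.
    subst hy
    have hdouble : (2 : ℕ) • WeierstrassCurve.Affine.Point.some _ _ hP = 0 := by
      rw [hsmul]; exact Point.add_self_of_Y_eq (by rw [hnegY]; ring)
    constructor
    · intro hquartic
      exfalso
      -- from the curve equation with `y = 0`, `x ∈ {0, α₁, α₂}`
      have hx : x * ((x - α₁) * (x - α₂)) = 0 := by linear_combination -hPeq
      rcases mul_eq_zero.mp hx with h0 | h12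
      · subst h0
        apply mul_ne_zero (pow_ne_zero 2 hα₁) (pow_ne_zero 2 hα₂)
        linear_combination hquartic
      · rcases mul_eq_zero.mp h12 with h1 | h2'
        · obtain rfl : x = α₁ := sub_eq_zero.mp h1
          apply mul_ne_zero (pow_ne_zero 2 hα₁) (pow_ne_zero 2 (sub_ne_zero.mpr hne))
          linear_combination hquartic
        · obtain rfl : x = α₂ := sub_eq_zero.mp h2'
          apply mul_ne_zero (pow_ne_zero 2 hα₂)
            (pow_ne_zero 2 (sub_ne_zero.mpr hne.symm))
          linear_combination hquartic
    · rintro (h | h) <;> rw [hdouble] at h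
      · exact absurd h.symm (Point.some_ne_zero hQ)
      · rw [Point.neg_some] at h
        exact absurd h.symm (Point.some_ne_zero _)
  · -- `y ≠ 0`, so `2P` is an affine point with `x`-coordinate `addX x x L`.
    have hy' : y ≠ (W α₁ α₂).negY x y := by
      rw [hnegY]; intro h; apply hy
      have : 2 * y = 0 := by linear_combination h
      exact (mul_eq_zero.mp this).resolve_left h2
    have hdouble : (2 : ℕ) • WeierstrassCurve.Affine.Point.some _ _ hP =
        WeierstrassCurve.Affine.Point.some _ _
          (nonsingular_add hP hP fun hxy => hy' hxy.2) := by
      rw [hsmul]; exact Point.add_self_of_Y_ne hy'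
    set L := (W α₁ α₂).slope x x y y with hLdef
    have hL : L = (3 * x ^ 2 - 2 * (α₁ + α₂) * x + α₁ * α₂) / (2 * y) := by
      rw [hLdef, slope_of_Y_ne rfl hy']
      rw [hnegY]
      simp only [W]
      ring_nf
    have hXval : (W α₁ α₂).addX x x L =
        L ^ 2 + (α₁ + α₂) - 2 * x := by
      simp only [addX, W]; ring
    -- the key algebraic identity: quartic = 4y²(addX - a)
    have hkey : x ^ 4 - 4 * a * x ^ 3 + 4 * (α₁ + α₂) * a * x ^ 2 - 2 * (α₁ * α₂) * x ^ 2
        - 4 * (α₁ * α₂) * a * x + α₁ ^ 2 * α₂ ^ 2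
        = 4 * y ^ 2 * ((W α₁ α₂).addX x x L - a) := by
      have hmain : 4 * y ^ 2 * ((W α₁ α₂).addX x x L - a)
          = (3 * x ^ 2 - 2 * (α₁ + α₂) * x + α₁ * α₂) ^ 2
            + 4 * y ^ 2 * ((α₁ + α₂) - 2 * x - a) := by
        rw [hXval, hL]
        field_simp
        ring
      rw [hmain]
      linear_combination (-4 * ((α₁ + α₂) - 2 * x - a)) * hPeq
    have h4y : (4 : K) * y ^ 2 ≠ 0 := by
      apply mul_ne_zero _ (pow_ne_zero 2 hy)
      have : (4 : K) = 2 * 2 := by norm_num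
      rw [this]; exact mul_ne_zero h2 h2
    rw [hkey, hdouble]
    constructor
    · intro h
      have hXa : (W α₁ α₂).addX x x L = a := by
        exact sub_eq_zero.mp ((mul_eq_zero.mp h).resolve_left h4y)
      -- the point `2P` lies on the curve with `x`-coordinate `a`
      have hEq2P : (W α₁ α₂).Equation ((W α₁ α₂).addX x x L)
          ((W α₁ α₂).addY x x y L) := equation_add hP.1 hP.1 fun hxy => hy' hxy.2
      rw [hXa] at hEq2P
      rcases Y_eq_of_X_eq hEq2P hQ.1 rfl with hb | hb
      · left
        rw [Point.some.injEq]
        exact ⟨hXa, hb⟩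
      · right
        rw [Point.neg_some, Point.some.injEq]
        exact ⟨hXa, hb⟩
    · rintro (h | h)
      · rw [Point.some.injEq] at h
        rw [h.1]; ring
      · rw [Point.neg_some, Point.some.injEq] at h
        rw [h.1]; ring

end Stmt8
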